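/- For any prime p and any positive integer n, the maximum over 0 ≤ k ≤ n of the p-adic valuation of the binomial coefficient C(n,k) equals the number of positive integers r such that p^r ≤ n and p^r does not divide n+1. -/

import Mathlib

/-- For a prime `p` and a positive integer `n`, the maximum over `0 ≤ k ≤ n` of the `p`-adic
valuation of the binomial coefficient `C(n,k)` equals the number of positive integers `r`
such that `p^r ≤ n` and `p^r` does not divide `n + 1`. -/
theorem max_padic_val_choose (p n : ℕ) (hp : p.Prime) (hn : 0 < n) :
    (Finset.range (n + 1)).sup (fun k => padicValNat p (n.choose k))
      = ((Finset.Icc 1 n).filter (fun r => p ^ r ≤ n ∧ ¬ p ^ r ∣ (n + 1))).card := by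
  haveI : Fact p.Prime := ⟨hp⟩
  have hp1 : 1 < p := hp.one_lt
  set L := Nat.log p n with hL
  set v := padicValNat p (n + 1) with hv
  have hn1 : n + 1 ≠ 0 := by omega
  -- rewrite the RHS filter as an interval
  have hS : (Finset.Icc 1 n).filter (fun r => p ^ r ≤ n ∧ ¬ p ^ r ∣ (n + 1))
      = Finset.Icc (v + 1) L := by
    ext r
    simp only [Finset.mem_filter, Finset.mem_Icc]
    constructor
    · rintro ⟨⟨h1, _⟩, h2, h3⟩
      refine ⟨?_, (Nat.le_log_iff_pow_le hp1 hn.ne').2 h2⟩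
      rcases Nat.lt_or_ge v r with h | h
      · omega
      · exact absurd ((padicValNat_dvd_iff_le hn1).2 h) h3
    · rintro ⟨h1, h2⟩
      have hpr : p ^ r ≤ n := (Nat.le_log_iff_pow_le hp1 hn.ne').1 h2
      have hrn : r ≤ n := le_trans (Nat.lt_pow_self (n := r) hp1).le hpr
      exact ⟨⟨by omega, hrn⟩, hpr, fun hd => by
        have := (padicValNat_dvd_iff_le hn1).1 hd; omega⟩
  rw [hS]
  have hlogb : Nat.log p n < n + 1 := Nat.lt_succ_of_le (Nat.log_le_self p n)
  have hsum_mod : ∀ k r : ℕ, k ≤ n → (k % p ^ r + (n - k) % p ^ r) % p ^ r = n % p ^ r := by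
    intro k r hk
    rw [← Nat.add_mod]
    congr 1
    omega
  apply le_antisymm
  · -- upper bound
    apply Finset.sup_le
    intro k hk
    have hkn : k ≤ n := by simpa [Nat.lt_succ_iff] using hk
    rw [padicValNat_choose hkn hlogb]
    apply Finset.card_le_card
    intro i hi
    simp only [Finset.mem_filter, Finset.mem_Ico] at hi
    obtain ⟨⟨hi1, _⟩, hcarry⟩ := hi
    have hPpos : 0 < p ^ i := Nat.pow_pos (by omega)
    have hle : p ^ i ≤ n := by
      calc p ^ i ≤ k % p ^ i + (n - k) % p ^ i := hcarry
        _ ≤ k + (n - k) := Nat.add_le_add (Nat.mod_le _ _) (Nat.mod_le _ _)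
        _ = n := by omega
    simp only [Finset.mem_Icc]
    refine ⟨?_, (Nat.le_log_iff_pow_le hp1 hn.ne').2 hle⟩
    -- show v < i : otherwise n % p^i = p^i - 1 and no carry is possible
    by_contra h
    have hdvd : p ^ i ∣ n + 1 := (padicValNat_dvd_iff_le hn1).2 (by omega)
    have h0 : (n + 1) % p ^ i = 0 := Nat.mod_eq_zero_of_dvd hdvd
    have hnlt : n % p ^ i < p ^ i := Nat.mod_lt _ hPpos
    have h3 : n % p ^ i = p ^ i - 1 := by
      obtain ⟨c, hc⟩ := hdvd
      rcases Nat.eq_zero_or_pos c with rfl | hcpos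
      · simp at hc
      obtain ⟨c', rfl⟩ : ∃ c', c = c' + 1 := ⟨c - 1, by omega⟩
      rw [Nat.mul_add, Nat.mul_one] at hc
      have hn' : n = p ^ i * c' + (p ^ i - 1) := by omega
      rw [hn', Nat.mul_add_mod, Nat.mod_eq_of_lt (by omega)]
    have halt : k % p ^ i < p ^ i := Nat.mod_lt _ hPpos
    have hblt : (n - k) % p ^ i < p ^ i := Nat.mod_lt _ hPpos
    have e2 : (k % p ^ i + (n - k) % p ^ i) % p ^ i
        = (k % p ^ i + (n - k) % p ^ i - p ^ i) % p ^ i := Nat.mod_eq_sub_mod hcarry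
    have e3 : k % p ^ i + (n - k) % p ^ i - p ^ i < p ^ i := by omega
    have hab : k % p ^ i + (n - k) % p ^ i - p ^ i = n % p ^ i := by
      rw [← Nat.mod_eq_of_lt e3, ← e2]
      exact hsum_mod k i hkn
    omega
  · -- lower bound: exhibit k₀ = n % p^L + p^v
    rcases le_or_gt L v with hLv | hvL
    · simp [Finset.Icc_eq_empty_of_lt (by omega : L < v + 1)]
    have hPL : p ^ L ≤ n := (Nat.le_log_iff_pow_le hp1 hn.ne').1 le_rfl
    have hpv_dvd : p ^ v ∣ n + 1 := (padicValNat_dvd_iff_le hn1).2 le_rfl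
    -- key: for v < r ≤ L, n % p^r + p^v < p^r
    have key : ∀ r, v < r → r ≤ L → n % p ^ r + p ^ v < p ^ r := by
      intro r hvr hrL
      have hPpos : 0 < p ^ r := Nat.pow_pos (by omega)
      have hpvpos : 0 < p ^ v := Nat.pow_pos (by omega)
      by_contra hge
      push_neg at hge
      have hnlt : n % p ^ r < p ^ r := Nat.mod_lt _ hPpos
      have hQdvd : p ^ v ∣ p ^ r * (n / p ^ r) :=
        Dvd.dvd.mul_right (pow_dvd_pow p (by omega)) _
      have hdvd1 : p ^ v ∣ n % p ^ r + 1 := by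
        have h3 : n + 1 = p ^ r * (n / p ^ r) + (n % p ^ r + 1) := by
          have := Nat.div_add_mod n (p ^ r); omega
        exact (Nat.dvd_add_right hQdvd).mp (h3 ▸ hpv_dvd)
      obtain ⟨m, hm⟩ := hdvd1
      have hpr_eq : p ^ r = p ^ v * p ^ (r - v) := by
        rw [← pow_add]; congr 1; omega
      have hm_le : m ≤ p ^ (r - v) := by
        refine Nat.le_of_mul_le_mul_left ?_ hpvpos
        omega
      have hm_ge : p ^ (r - v) ≤ m := by
        have h4 : p ^ v * p ^ (r - v) < p ^ v * (m + 1) := by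
          rw [Nat.mul_add, Nat.mul_one]; omega
        have := Nat.lt_of_mul_lt_mul_left h4
        omega
      have heq : n % p ^ r + 1 = p ^ r := by
        rw [hm, le_antisymm hm_le hm_ge, ← hpr_eq]
      have hdvd2 : p ^ r ∣ n + 1 := by
        have h3 : n + 1 = p ^ r * (n / p ^ r) + p ^ r := by
          have := Nat.div_add_mod n (p ^ r); omega
        exact h3 ▸ Nat.dvd_add (Dvd.intro _ rfl) dvd_rfl
      have := (padicValNat_dvd_iff_le hn1).1 hdvd2
      omega
    obtain ⟨k₀, hk₀⟩ : ∃ k₀, k₀ = n % p ^ L + p ^ v := ⟨_, rfl⟩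
    have hk₀lt : k₀ < p ^ L := hk₀ ▸ key L hvL le_rfl
    have hk₀n : k₀ ≤ n := le_trans hk₀lt.le hPL
    have hk₀mem : k₀ ∈ Finset.range (n + 1) := Finset.mem_range.2 (by omega)
    refine le_trans ?_ (Finset.le_sup hk₀mem)
    rw [padicValNat_choose hk₀n hlogb]
    apply Finset.card_le_card
    intro r hr
    simp only [Finset.mem_Icc] at hr
    obtain ⟨hr1, hr2⟩ := hr
    have hPpos : 0 < p ^ r := Nat.pow_pos (by omega)
    have hpvpos : 0 < p ^ v := Nat.pow_pos (by omega)
    have hkey := key r (by omega) hr2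
    have hmod : k₀ % p ^ r = n % p ^ r + p ^ v := by
      calc k₀ % p ^ r = (n % p ^ L + p ^ v) % p ^ r := by rw [hk₀]
        _ = (n % p ^ L % p ^ r + p ^ v % p ^ r) % p ^ r := Nat.add_mod _ _ _
        _ = (n % p ^ r % p ^ r + p ^ v % p ^ r) % p ^ r := by
              rw [Nat.mod_mod_of_dvd n (pow_dvd_pow p hr2), Nat.mod_mod_of_dvd n (dvd_refl _)]
        _ = (n % p ^ r + p ^ v) % p ^ r := (Nat.add_mod _ _ _).symm
        _ = n % p ^ r + p ^ v := Nat.mod_eq_of_lt hkey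
    simp only [Finset.mem_filter, Finset.mem_Ico]
    refine ⟨⟨by omega, by omega⟩, ?_⟩
    -- carry at r
    by_contra hlt
    push_neg at hlt
    have hab : (k₀ % p ^ r + (n - k₀) % p ^ r) % p ^ r = n % p ^ r := hsum_mod k₀ r hk₀n
    rw [Nat.mod_eq_of_lt hlt] at hab
    obtain ⟨s, hs⟩ : ∃ s, s = n % p ^ r := ⟨_, rfl⟩
    rw [← hs] at hmod hab
    have h1 : s + p ^ v ≤ s := by
      calc s + p ^ v = k₀ % p ^ r := hmod.symm
        _ ≤ k₀ % p ^ r + (n - k₀) % p ^ r := Nat.le_add_right _ _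
        _ = s := hab
    exact Nat.lt_irrefl s (lt_of_lt_of_le (Nat.lt_add_of_pos_right hpvpos) h1)
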